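/- Let G = (V,E) be a graph on {1,…,n} with maximum degree d, let (i,j) ∈ E, and let a Bernoulli(p) test include each node independently with probability p. Define the per-test masking probability p₁^{ij} as the probability that it is NOT the case that both i and j are in the test and no other edge of G is covered by the test. Then 1 − p²·(1 − P_G[Y=1] + (1+2d)p²) ≤ p₁^{ij} ≤ 1 − p²·(1 − P_G[Y=1] − 2dp). -/

import Mathlib

open scoped BigOperators Classical
open Finset Filter

noncomputable section

/-- The set of all potential edges: unordered pairs of distinct nodes of `Fin n`. -/
def allPairs (n : ℕ) : Finset (Sym2 (Fin n)) :=
  Finset.univ.filter fun e => ¬ e.IsDiag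

/-- Both endpoints of the pair `e` lie in the test `L`. -/
def pairIn {n : ℕ} (e : Sym2 (Fin n)) (L : Finset (Fin n)) : Prop :=
  ∀ v ∈ e, v ∈ L

/-- The test `L` covers some edge of the edge set `E` (positive outcome `Y = 1`). -/
def covers {n : ℕ} (E : Finset (Sym2 (Fin n))) (L : Finset (Fin n)) : Prop :=
  ∃ e ∈ E, pairIn e L

/-- ER(n,q) probability weight of a given edge set `E`. -/
def erWeight (n : ℕ) (q : ℝ) (E : Finset (Sym2 (Fin n))) : ℝ :=
  q ^ E.card * (1 - q) ^ ((allPairs n).card - E.card)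

/-- Probability of an event under the Erdős–Rényi random graph ER(n,q). -/
def erProb (n : ℕ) (q : ℝ) (A : Finset (Sym2 (Fin n)) → Prop) : ℝ :=
  ∑ E ∈ (allPairs n).powerset, if A E then erWeight n q E else 0

/-- Bernoulli(p) probability weight of a single test `L ⊆ {1,…,n}`. -/
def testWeight (n : ℕ) (p : ℝ) (L : Finset (Fin n)) : ℝ :=
  p ^ L.card * (1 - p) ^ (n - L.card)

/-- Probability of an event for a single Bernoulli(p) test. -/
def bernProb (n : ℕ) (p : ℝ) (A : Finset (Fin n) → Prop) : ℝ :=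
  ∑ L : Finset (Fin n), if A L then testWeight n p L else 0

/-- Probability weight of `t` i.i.d. Bernoulli(p) tests. -/
def testsWeight (n t : ℕ) (p : ℝ) (Ls : Fin t → Finset (Fin n)) : ℝ :=
  ∏ i, testWeight n p (Ls i)

/-- Probability of an event for `t` i.i.d. Bernoulli(p) tests. -/
def bernTestsProb (n t : ℕ) (p : ℝ) (A : (Fin t → Finset (Fin n)) → Prop) : ℝ :=
  ∑ Ls : Fin t → Finset (Fin n), if A Ls then testsWeight n t p Ls else 0

/-- Joint probability over an ER(n,q) graph and `t` i.i.d. Bernoulli(p) tests. -/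
def erTestsProb (n t : ℕ) (q p : ℝ)
    (A : Finset (Sym2 (Fin n)) → (Fin t → Finset (Fin n)) → Prop) : ℝ :=
  ∑ E ∈ (allPairs n).powerset, ∑ Ls : Fin t → Finset (Fin n),
    if A E Ls then erWeight n q E * testsWeight n t p Ls else 0

/-- Degree of node `v` in the edge set `E`. -/
def degOf {n : ℕ} (E : Finset (Sym2 (Fin n))) (v : Fin n) : ℕ :=
  (E.filter fun e => v ∈ e).card

/-- Maximum degree of the edge set `E`. -/
def maxDeg {n : ℕ} (E : Finset (Sym2 (Fin n))) : ℕ :=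
  Finset.univ.sup (degOf E)

/-- Average number of edges of ER(n, q n): `k̄ = q·C(n,2)`. -/
def kbar (q : ℕ → ℝ) (n : ℕ) : ℝ := q n * (n.choose 2 : ℝ)

/-- Two pairs are vertex-disjoint. -/
def sym2Disjoint {n : ℕ} (e e' : Sym2 (Fin n)) : Prop := ∀ v, v ∈ e → v ∉ e'

lemma st12_sum_w_one {α : Type*} [DecidableEq α] (p : ℝ) (U : Finset α) :
    ∑ M ∈ U.powerset, p ^ M.card * (1 - p) ^ (U.card - M.card) = 1 := by
  calc ∑ M ∈ U.powerset, p ^ M.card * (1 - p) ^ (U.card - M.card)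
      = ∑ M ∈ U.powerset, (∏ _x ∈ M, p) * ∏ _x ∈ U \ M, (1 - p) := by
        refine Finset.sum_congr rfl fun M hM => ?_
        rw [Finset.prod_const, Finset.prod_const,
          Finset.card_sdiff, Finset.inter_eq_left.mpr (Finset.mem_powerset.mp hM)]
    _ = ∏ _x ∈ U, (p + (1 - p)) := (Finset.prod_add _ _ _).symm
    _ = 1 := by simp

lemma st12_w_nonneg {p : ℝ} (hp0 : 0 ≤ p) (hp1 : p ≤ 1) (a b : ℕ) :
    0 ≤ p ^ a * (1 - p) ^ b :=
  mul_nonneg (pow_nonneg hp0 _) (pow_nonneg (by linarith) _)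

lemma st12_mem_prob {α : Type*} [DecidableEq α] (p : ℝ) (U : Finset α) (w : α) (hw : w ∈ U) :
    ∑ M ∈ U.powerset, (if w ∈ M then p ^ M.card * (1 - p) ^ (U.card - M.card) else 0) = p := by
  have hU : insert w (U.erase w) = U := Finset.insert_erase hw
  rw [← hU, Finset.sum_powerset_insert (Finset.notMem_erase w U)]
  have h1 : ∑ t ∈ (U.erase w).powerset,
      (if w ∈ t then p ^ t.card * (1 - p) ^ ((insert w (U.erase w)).card - t.card) else 0) = 0 := by
    refine Finset.sum_eq_zero fun t ht => ?_
    have : w ∉ t := fun hwt => Finset.notMem_erase w U (Finset.mem_powerset.mp ht hwt)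
    simp [this]
  rw [h1, zero_add]
  have h2 : ∀ t ∈ (U.erase w).powerset,
      (if w ∈ insert w t then p ^ (insert w t).card *
        (1 - p) ^ ((insert w (U.erase w)).card - (insert w t).card) else 0)
      = p * (p ^ t.card * (1 - p) ^ ((U.erase w).card - t.card)) := by
    intro t ht
    have hwt : w ∉ t := fun hwt => Finset.notMem_erase w U (Finset.mem_powerset.mp ht hwt)
    rw [if_pos (Finset.mem_insert_self w t), Finset.card_insert_of_notMem hwt,
      Finset.card_insert_of_notMem (Finset.notMem_erase w U)]
    have h3 : (U.erase w).card + 1 - (t.card + 1) = (U.erase w).card - t.card := by omega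
    rw [h3, pow_succ]
    ring
  rw [Finset.sum_congr rfl h2, ← Finset.mul_sum, st12_sum_w_one, mul_one]

lemma st12_sum_split {α : Type*} [DecidableEq α] (S U : Finset α) (hd : Disjoint S U)
    (f : Finset α → ℝ) :
    ∑ L ∈ (S ∪ U).powerset, f L = ∑ K ∈ S.powerset, ∑ M ∈ U.powerset, f (K ∪ M) := by
  rw [← Finset.sum_product']
  refine Finset.sum_nbij' (fun L => (L ∩ S, L ∩ U)) (fun z => z.1 ∪ z.2) ?_ ?_ ?_ ?_ ?_
  · intro L hL
    simp [Finset.mem_product, Finset.mem_powerset, Finset.inter_subset_right]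
  · intro z hz
    rw [Finset.mem_product] at hz
    exact Finset.mem_powerset.mpr (Finset.union_subset_union
      (Finset.mem_powerset.mp hz.1) (Finset.mem_powerset.mp hz.2))
  · intro L hL
    dsimp only
    rw [← Finset.inter_union_distrib_left]
    exact Finset.inter_eq_left.mpr (Finset.mem_powerset.mp hL)
  · intro z hz
    rw [Finset.mem_product] at hz
    have h1 := Finset.mem_powerset.mp hz.1
    have h2 := Finset.mem_powerset.mp hz.2
    have e1 : (z.1 ∪ z.2) ∩ S = z.1 := by
      ext x
      simp only [Finset.mem_inter, Finset.mem_union]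
      constructor
      · rintro ⟨hx | hx, hxS⟩
        · exact hx
        · exact absurd hxS (Finset.disjoint_right.mp hd (h2 hx))
      · intro hx; exact ⟨Or.inl hx, h1 hx⟩
    have e2 : (z.1 ∪ z.2) ∩ U = z.2 := by
      ext x
      simp only [Finset.mem_inter, Finset.mem_union]
      constructor
      · rintro ⟨hx | hx, hxU⟩
        · exact absurd hxU (Finset.disjoint_left.mp hd (h1 hx))
        · exact hx
      · intro hx; exact ⟨Or.inr hx, h2 hx⟩
    rw [Prod.ext_iff]
    exact ⟨e1, e2⟩
  · intro L hL
    dsimp only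
    rw [← Finset.inter_union_distrib_left,
      Finset.inter_eq_left.mpr (Finset.mem_powerset.mp hL)]

lemma st12_bernProb_split (n : ℕ) (p : ℝ) (S : Finset (Fin n)) (A : Finset (Fin n) → Prop) :
    bernProb n p A = ∑ K ∈ S.powerset, ∑ M ∈ Sᶜ.powerset,
      (if A (K ∪ M) then (p ^ K.card * (1 - p) ^ (S.card - K.card)) *
        (p ^ M.card * (1 - p) ^ (Sᶜ.card - M.card)) else 0) := by
  have h0 : bernProb n p A = ∑ L ∈ (S ∪ Sᶜ).powerset, (if A L then testWeight n p L else 0) := by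
    rw [Finset.union_compl, Finset.powerset_univ]
    rfl
  rw [h0, st12_sum_split S Sᶜ disjoint_compl_right]
  refine Finset.sum_congr rfl fun K hK => Finset.sum_congr rfl fun M hM => ?_
  have hKS := Finset.mem_powerset.mp hK
  have hMU := Finset.mem_powerset.mp hM
  have hdKM : Disjoint K M := (disjoint_compl_right.mono hKS hMU)
  have hcard : (K ∪ M).card = K.card + M.card := Finset.card_union_of_disjoint hdKM
  have hn : S.card + Sᶜ.card = n := by
    rw [Finset.card_add_card_compl, Fintype.card_fin]
  have hK' : K.card ≤ S.card := Finset.card_le_card hKS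
  have hM' : M.card ≤ Sᶜ.card := Finset.card_le_card hMU
  have hexp : n - (K.card + M.card) = (S.card - K.card) + (Sᶜ.card - M.card) := by omega
  have hw : testWeight n p (K ∪ M) =
      (p ^ K.card * (1 - p) ^ (S.card - K.card)) *
        (p ^ M.card * (1 - p) ^ (Sᶜ.card - M.card)) := by
    rw [testWeight, hcard, hexp, pow_add, pow_add]
    ring
  rw [hw]

lemma st12_testWeight_sum (n : ℕ) (p : ℝ) :
    ∑ L : Finset (Fin n), testWeight n p L = 1 := by
  have h : ∀ L : Finset (Fin n), testWeight n p L
      = p ^ L.card * (1 - p) ^ ((Finset.univ : Finset (Fin n)).card - L.card) := by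
    intro L
    rw [testWeight, Finset.card_univ, Fintype.card_fin]
  calc ∑ L : Finset (Fin n), testWeight n p L
      = ∑ L ∈ (Finset.univ : Finset (Fin n)).powerset,
          p ^ L.card * (1 - p) ^ ((Finset.univ : Finset (Fin n)).card - L.card) := by
        rw [Finset.powerset_univ]
        exact Finset.sum_congr rfl fun L _ => h L
    _ = 1 := st12_sum_w_one p _

lemma st12_if_pos' {c : Prop} {h : Decidable c} {x y : ℝ} (hc : c) : @ite ℝ c h x y = x :=
  if_pos hc

lemma st12_if_neg' {c : Prop} {h : Decidable c} {x y : ℝ} (hc : ¬ c) : @ite ℝ c h x y = y :=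
  if_neg hc

lemma st12_ite_nonneg {c : Prop} {h : Decidable c} {x : ℝ} (hx : 0 ≤ x) :
    0 ≤ if c then x else 0 := by
  split
  · exact hx
  · exact le_refl 0


/-- bounds on the per-test masking probability.
Let `G` have maximum degree `d`, let `(i,j) ∈ E`, and let a Bernoulli(p) test include each
node independently with probability `p`.  With `p₁^{ij}` the probability that it is NOT the
case that both `i` and `j` are in the test and no other edge is covered,
`1 − p²(1 − P_G[Y=1] + (1+2d)p²) ≤ p₁^{ij} ≤ 1 − p²(1 − P_G[Y=1] − 2dp)`. -/
theorem statement12 (n d : ℕ) (p : ℝ) (hp0 : 0 ≤ p) (hp1 : p ≤ 1)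
    (E : Finset (Sym2 (Fin n))) (hsimple : ∀ e ∈ E, ¬ e.IsDiag)
    (hmax : maxDeg E = d) (e : Sym2 (Fin n)) (he : e ∈ E) :
    1 - p ^ 2 * (1 - bernProb n p (covers E) + (1 + 2 * d) * p ^ 2) ≤
      1 - bernProb n p (fun L => pairIn e L ∧ ∀ e' ∈ E, e' ≠ e → ¬ pairIn e' L) ∧
    1 - bernProb n p (fun L => pairIn e L ∧ ∀ e' ∈ E, e' ≠ e → ¬ pairIn e' L) ≤
      1 - p ^ 2 * (1 - bernProb n p (covers E) - 2 * d * p) := by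
  classical
  revert he
  induction e using Sym2.ind with
  | _ i j =>
  intro he
  have hij : i ≠ j := fun h => hsimple _ he (by rw [h]; exact Sym2.mk_isDiag_iff.mpr rfl)
  set S : Finset (Fin n) := {i, j} with hSdef
  have hiS : i ∈ S := by simp [hSdef]
  have hjS : j ∈ S := by simp [hSdef]
  have hScard : S.card = 2 := Finset.card_pair hij
  have hmemS : ∀ v : Fin n, v ∈ S ↔ v = i ∨ v = j := by intro v; simp [hSdef]
  have hp2 : (0:ℝ) ≤ p ^ 2 := pow_nonneg hp0 2
  have hd0 : (0:ℝ) ≤ (d : ℝ) := Nat.cast_nonneg d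
  set wU : Finset (Fin n) → ℝ := fun M => p ^ M.card * (1 - p) ^ (Sᶜ.card - M.card) with hwUdef
  set wS : Finset (Fin n) → ℝ := fun K => p ^ K.card * (1 - p) ^ (S.card - K.card) with hwSdef
  have hwU0 : ∀ M, 0 ≤ wU M := fun M => st12_w_nonneg hp0 hp1 _ _
  have hwS0 : ∀ K, 0 ≤ wS K := fun K => st12_w_nonneg hp0 hp1 _ _
  have hwSsum : ∑ K ∈ S.powerset, wS K = 1 := st12_sum_w_one p S
  have hwUsum : ∑ M ∈ Sᶜ.powerset, wU M = 1 := st12_sum_w_one p Sᶜ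
  have hwSS : wS S = p ^ 2 := by
    rw [hwSdef]; dsimp only; rw [hScard]; norm_num
  set D : Finset (Fin n) → Prop :=
    fun M => ∀ e' ∈ E, e' ≠ s(i, j) → ¬ pairIn e' (S ∪ M) with hDdef
  set D2 : Finset (Fin n) → Prop :=
    fun M => ∀ e' ∈ E, ¬ pairIn e' M with hD2def
  set R : ℝ := ∑ M ∈ Sᶜ.powerset, if D M then wU M else 0 with hRdef
  set R2 : ℝ := ∑ M ∈ Sᶜ.powerset, if D2 M then wU M else 0 with hR2def
  have hR0 : 0 ≤ R := Finset.sum_nonneg fun M _ => st12_ite_nonneg (hwU0 M)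
  have hR1 : R ≤ 1 := by
    rw [hRdef, ← hwUsum]
    refine Finset.sum_le_sum fun M _ => ?_
    by_cases h : D M
    · rw [if_pos h]
    · rw [if_neg h]; exact hwU0 M
  -- complement
  have hQ1 : bernProb n p (fun L => ¬ covers E L) = 1 - bernProb n p (covers E) := by
    have hsum1 : bernProb n p (covers E) + bernProb n p (fun L => ¬ covers E L) = 1 := by
      rw [bernProb, bernProb, ← Finset.sum_add_distrib,
        ← st12_testWeight_sum n p]
      refine Finset.sum_congr rfl fun L _ => ?_
      by_cases h : covers E L <;> simp [h]
    linarith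
  -- Step A : bernProb of the masking event equals p^2 * R
  have hPB : bernProb n p
      (fun L => pairIn s(i, j) L ∧ ∀ e' ∈ E, e' ≠ s(i, j) → ¬ pairIn e' L) = p ^ 2 * R := by
    rw [st12_bernProb_split n p S]
    rw [Finset.sum_eq_single_of_mem S (Finset.mem_powerset.mpr (Finset.Subset.refl S))]
    · rw [hRdef, Finset.mul_sum]
      refine Finset.sum_congr rfl fun M hM => ?_
      have hMU := Finset.mem_powerset.mp hM
      have hcond : (pairIn s(i, j) (S ∪ M) ∧
          ∀ e' ∈ E, e' ≠ s(i, j) → ¬ pairIn e' (S ∪ M)) ↔ D M := by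
        constructor
        · exact fun h => h.2
        · intro h
          refine ⟨?_, h⟩
          intro v hv
          rcases Sym2.mem_iff.mp hv with rfl | rfl
          · exact Finset.mem_union_left _ hiS
          · exact Finset.mem_union_left _ hjS
      by_cases hDM : D M
      · rw [st12_if_pos' (hcond.mpr hDM), st12_if_pos' hDM, hScard]
        norm_num
        exact Or.inl rfl
      · rw [st12_if_neg' (fun hc => hDM (hcond.mp hc)), st12_if_neg' hDM, mul_zero]
    · intro K hK hKne
      refine Finset.sum_eq_zero fun M hM => ?_
      rw [if_neg]
      rintro ⟨hpin, -⟩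
      apply hKne
      have hKS := Finset.mem_powerset.mp hK
      have hMU := Finset.mem_powerset.mp hM
      have hmemK : ∀ v : Fin n, v ∈ S → v ∈ K := by
        intro v hvS
        have hv : v ∈ s(i, j) := by
          rcases (hmemS v).mp hvS with rfl | rfl
          · exact Sym2.mem_mk_left v j
          · exact Sym2.mem_mk_right i v
        rcases Finset.mem_union.mp (hpin v hv) with h | h
        · exact h
        · exact absurd hvS (Finset.mem_compl.mp (hMU h))
      exact Finset.Subset.antisymm hKS (fun v hv => hmemK v hv)
  -- Step D : (1 - p^2) * R ≤ Q
  have hDimp : ∀ K, K ⊆ S → K ≠ S → ∀ M, M ⊆ Sᶜ → D M → ¬ covers E (K ∪ M) := by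
    rintro K hKS hKne M hMU hDM ⟨e', he'E, hpin⟩
    by_cases hee : e' = s(i, j)
    · subst hee
      apply hKne
      have hmemK : ∀ v : Fin n, v ∈ S → v ∈ K := by
        intro v hvS
        have hv : v ∈ s(i, j) := by
          rcases (hmemS v).mp hvS with rfl | rfl
          · exact Sym2.mem_mk_left v j
          · exact Sym2.mem_mk_right i v
        rcases Finset.mem_union.mp (hpin v hv) with h | h
        · exact h
        · exact absurd hvS (Finset.mem_compl.mp (hMU h))
      exact Finset.Subset.antisymm hKS (fun v hv => hmemK v hv)
    · refine hDM e' he'E hee fun v hv => ?_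
      rcases Finset.mem_union.mp (hpin v hv) with h | h
      · exact Finset.mem_union_left _ (hKS h)
      · exact Finset.mem_union_right _ h
  have hstepD : (1 - p ^ 2) * R ≤ bernProb n p (fun L => ¬ covers E L) := by
    rw [st12_bernProb_split n p S (fun L => ¬ covers E L)]
    have e1 : ∑ K ∈ S.powerset, (if K = S then (0:ℝ) else wS K * R)
        = (1 : ℝ) * R - p ^ 2 * R := by
      have h : ∀ K ∈ S.powerset, (if K = S then (0:ℝ) else wS K * R)
          = wS K * R - (if K = S then wS K * R else 0) := by
        intro K _; by_cases h : K = S <;> simp [h]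
      rw [Finset.sum_congr rfl h, Finset.sum_sub_distrib, Finset.sum_ite_eq' _ S _,
        if_pos (Finset.mem_powerset.mpr (Finset.Subset.refl S)), ← Finset.sum_mul, hwSsum, hwSS]
    have e2 : (1 - p ^ 2) * R = ∑ K ∈ S.powerset, (if K = S then (0:ℝ) else wS K * R) := by
      rw [e1]; ring
    rw [e2]
    refine Finset.sum_le_sum fun K hK => ?_
    by_cases hKne : K = S
    · rw [if_pos hKne]
      exact Finset.sum_nonneg fun M _ =>
        st12_ite_nonneg (mul_nonneg (st12_w_nonneg hp0 hp1 _ _) (st12_w_nonneg hp0 hp1 _ _))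
    · rw [if_neg hKne]
      have hRform : wS K * R = ∑ M ∈ Sᶜ.powerset, (if D M then wS K * wU M else 0) := by
        rw [hRdef, Finset.mul_sum]
        exact Finset.sum_congr rfl fun M _ => by rw [mul_ite, mul_zero]
      rw [hRform]
      refine Finset.sum_le_sum fun M hM => ?_
      by_cases hDM : D M
      · rw [st12_if_pos' hDM, st12_if_pos' (hDimp K (Finset.mem_powerset.mp hK) hKne M
          (Finset.mem_powerset.mp hM) hDM)]
      · rw [st12_if_neg' hDM]
        by_cases hc : ¬ covers E (K ∪ M)
        · rw [st12_if_pos' hc]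
          exact mul_nonneg (st12_w_nonneg hp0 hp1 _ _) (st12_w_nonneg hp0 hp1 _ _)
        · rw [st12_if_neg' hc]
  -- Step E : Q ≤ R2
  have hstepE : bernProb n p (fun L => ¬ covers E L) ≤ R2 := by
    rw [st12_bernProb_split n p S (fun L => ¬ covers E L)]
    have h2 : ∑ K ∈ S.powerset, wS K * R2 = R2 := by
      rw [← Finset.sum_mul, hwSsum, one_mul]
    rw [← h2]
    refine Finset.sum_le_sum fun K hK => ?_
    have hRform : wS K * R2 = ∑ M ∈ Sᶜ.powerset, (if D2 M then wS K * wU M else 0) := by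
      rw [hR2def, Finset.mul_sum]
      exact Finset.sum_congr rfl fun M _ => by rw [mul_ite, mul_zero]
    rw [hRform]
    refine Finset.sum_le_sum fun M hM => ?_
    by_cases hc : ¬ covers E (K ∪ M)
    · rw [st12_if_pos' hc, st12_if_pos']
      intro e' he'E hpin
      exact hc ⟨e', he'E, fun v hv => Finset.mem_union_right _ (hpin v hv)⟩
    · rw [st12_if_neg' hc]
      by_cases hD2M : D2 M
      · rw [st12_if_pos' hD2M]; exact mul_nonneg (hwS0 K) (hwU0 M)
      · rw [st12_if_neg' hD2M]
  -- Step F : R2 ≤ R + 2*d*p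
  set N : Finset (Fin n) := Sᶜ.filter (fun w => ∃ u ∈ S, s(u, w) ∈ E) with hNdef
  have hdeg : ∀ u : Fin n, degOf E u ≤ d := by
    intro u
    rw [← hmax, maxDeg]
    exact Finset.le_sup (Finset.mem_univ u)
  have hNcard : (N.card : ℝ) ≤ 2 * d := by
    have hsub : N ⊆ (Finset.univ.filter fun w => s(i, w) ∈ E) ∪
        (Finset.univ.filter fun w => s(j, w) ∈ E) := by
      intro w hw
      obtain ⟨-, u, huS, hE⟩ := Finset.mem_filter.mp hw
      rcases (hmemS u).mp huS with rfl | rfl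
      · exact Finset.mem_union_left _ (Finset.mem_filter.mpr ⟨Finset.mem_univ w, hE⟩)
      · exact Finset.mem_union_right _ (Finset.mem_filter.mpr ⟨Finset.mem_univ w, hE⟩)
    have hone : ∀ u : Fin n, (Finset.univ.filter fun w => s(u, w) ∈ E).card ≤ d := by
      intro u
      refine le_trans (Finset.card_le_card_of_injOn (fun w => s(u, w)) ?_ ?_) (hdeg u)
      · intro w hw
        exact Finset.mem_filter.mpr ⟨(Finset.mem_filter.mp hw).2, Sym2.mem_mk_left u w⟩
      · intro w1 _ w2 _ hww
        rcases Sym2.eq_iff.mp hww with ⟨-, h⟩ | ⟨h1, h2⟩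
        · exact h
        · rw [← h1, h2]
    have := le_trans (Finset.card_le_card hsub)
      (le_trans (Finset.card_union_le _ _) (add_le_add (hone i) (hone j)))
    calc (N.card : ℝ) ≤ ((d + d : ℕ) : ℝ) := by exact_mod_cast this
      _ = 2 * d := by push_cast; ring
  have himp : ∀ M, M ⊆ Sᶜ → D2 M → ¬ D M → ∃ w ∈ N, w ∈ M := by
    intro M hMU hD2M hnDM
    have hnDM' : ∃ e' ∈ E, e' ≠ s(i, j) ∧ pairIn e' (S ∪ M) := by
      by_contra hcon
      push_neg at hcon
      exact hnDM fun e' he' hne => (hcon e' he') hne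
    obtain ⟨e', he'E, hne, hpin⟩ := hnDM'
    by_cases hall : ∀ v ∈ e', v ∉ S
    · exfalso
      refine hD2M e' he'E fun v hv => ?_
      rcases Finset.mem_union.mp (hpin v hv) with h | h
      · exact absurd h (hall v hv)
      · exact h
    · push_neg at hall
      obtain ⟨u, hue, huS⟩ := hall
      obtain ⟨w, rfl⟩ := Sym2.mem_iff_exists.mp hue
      have huw : u ≠ w := fun h => hsimple _ he'E (by rw [h]; exact Sym2.mk_isDiag_iff.mpr rfl)
      have hwS : w ∉ S := by
        intro hwS
        apply hne
        rcases (hmemS u).mp huS with rfl | rfl <;> rcases (hmemS w).mp hwS with rfl | rfl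
        · exact absurd rfl huw
        · rfl
        · exact Sym2.eq_swap
        · exact absurd rfl huw
      refine ⟨w, Finset.mem_filter.mpr ⟨Finset.mem_compl.mpr hwS, u, huS, he'E⟩, ?_⟩
      rcases Finset.mem_union.mp (hpin w (Sym2.mem_mk_right u w)) with h | h
      · exact absurd h hwS
      · exact h
  have hstepF : R2 ≤ R + 2 * d * p := by
    have hterm : ∀ M ∈ Sᶜ.powerset, (if D2 M then wU M else 0)
        ≤ (if D M then wU M else 0) + ∑ w ∈ N, (if w ∈ M then wU M else 0) := by
      intro M hM
      have hsumnn : (0:ℝ) ≤ ∑ w ∈ N, (if w ∈ M then wU M else 0) :=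
        Finset.sum_nonneg fun w _ => st12_ite_nonneg (hwU0 M)
      by_cases hD2M : D2 M
      · rw [if_pos hD2M]
        by_cases hDM : D M
        · rw [if_pos hDM]; linarith
        · obtain ⟨w, hwN, hwM⟩ := himp M (Finset.mem_powerset.mp hM) hD2M hDM
          rw [if_neg hDM, zero_add]
          have h1 : (if w ∈ M then wU M else 0) ≤ ∑ w' ∈ N, (if w' ∈ M then wU M else 0) :=
            Finset.single_le_sum (f := fun w' => if w' ∈ M then wU M else 0)
              (fun w' _ => st12_ite_nonneg (hwU0 M)) hwN
          rw [if_pos hwM] at h1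
          exact h1
      · rw [if_neg hD2M]
        have : (0:ℝ) ≤ (if D M then wU M else 0) := st12_ite_nonneg (hwU0 M)
        linarith
    calc R2 ≤ ∑ M ∈ Sᶜ.powerset,
          ((if D M then wU M else 0) + ∑ w ∈ N, (if w ∈ M then wU M else 0)) :=
        Finset.sum_le_sum hterm
      _ = R + ∑ M ∈ Sᶜ.powerset, ∑ w ∈ N, (if w ∈ M then wU M else 0) := by
        rw [Finset.sum_add_distrib, hRdef]
      _ = R + ∑ w ∈ N, ∑ M ∈ Sᶜ.powerset, (if w ∈ M then wU M else 0) := by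
        rw [Finset.sum_comm]
      _ = R + ∑ w ∈ N, p := by
        congr 1
        refine Finset.sum_congr rfl fun w hw => ?_
        exact st12_mem_prob p Sᶜ w (Finset.mem_filter.mp hw).1
      _ = R + N.card * p := by rw [Finset.sum_const, nsmul_eq_mul]
      _ ≤ R + 2 * d * p := by
        have := mul_le_mul_of_nonneg_right hNcard hp0
        linarith
  -- assemble
  have hA : R ≤ bernProb n p (fun L => ¬ covers E L) + p ^ 2 := by
    have h1 : p ^ 2 * R ≤ p ^ 2 * 1 := mul_le_mul_of_nonneg_left hR1 hp2
    have h2 : (1 - p ^ 2) * R = R - p ^ 2 * R := by ring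
    rw [h2] at hstepD
    linarith
  have hB : bernProb n p (fun L => ¬ covers E L) - 2 * d * p ≤ R := by linarith
  have hdp2 : (0:ℝ) ≤ (d:ℝ) * p ^ 2 := mul_nonneg hd0 hp2
  constructor
  · rw [hPB]
    have hA2 : R ≤ (1 - bernProb n p (covers E)) + (1 + 2 * d) * p ^ 2 := by
      rw [hQ1] at hA
      nlinarith
    have := mul_le_mul_of_nonneg_left hA2 hp2
    nlinarith
  · rw [hPB]
    have hB2 : (1 - bernProb n p (covers E)) - 2 * d * p ≤ R := by rw [hQ1] at hB; linarith
    have := mul_le_mul_of_nonneg_left hB2 hp2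
    nlinarith


end
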